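/- arXiv:2603.07698 — 3 statements merged into one kernel-verified Lean document; each statement's English description precedes it below -/
import Mathlib

section
/- Let E be a real normed vector space, let T ≥ 1 be an integer, let B ≥ 0, and let x : ℕ → E be a sequence with ‖x(q)‖ ≤ B for every q ≥ 0. Then Σ_{q=1}^∞ 2^{-q} · ‖ x(0) + (if 2^q ≤ T then 2^q • (x(q) − x(q−1)) else 0) ‖² ≤ 2B² + 16B²T. -/
/-- Second-order MLMC error bound: if every level estimate is bounded in norm by B,
the expected squared norm of the MLMC estimator is at most 2B² + 16B²T. -/
theorem mlmc_second_order_bound {E : Type*} [NormedAddCommGroup E] [NormedSpace ℝ E]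
    (T : ℕ) (hT : 1 ≤ T) (B : ℝ) (hB : 0 ≤ B) (x : ℕ → E)
    (hx : ∀ q, ‖x q‖ ≤ B) :
    ∑' q : ℕ, ((1 : ℝ) / 2 ^ (q + 1)) *
      ‖x 0 + (if 2 ^ (q + 1) ≤ T then ((2 : ℝ) ^ (q + 1)) • (x (q + 1) - x q) else 0)‖ ^ 2
      ≤ 2 * B ^ 2 + 16 * B ^ 2 * T := by
  have hT0 : T ≠ 0 := by omega
  set K := Nat.log 2 T with hKdef
  set f : ℕ → ℝ := fun q => ((1 : ℝ) / 2 ^ (q + 1)) *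
      ‖x 0 + (if 2 ^ (q + 1) ≤ T then ((2 : ℝ) ^ (q + 1)) • (x (q + 1) - x q) else 0)‖ ^ 2
    with hf
  set a : ℕ → ℝ := fun q => 2 * B ^ 2 * ((1 : ℝ) / 2 ^ (q + 1)) with ha
  set b : ℕ → ℝ := fun q => if 2 ^ (q + 1) ≤ T then 8 * B ^ 2 * (2 : ℝ) ^ (q + 1) else 0 with hb
  set g : ℕ → ℝ := fun q => a q + b q with hg
  -- pointwise bound
  have key : ∀ q, f q ≤ g q := by
    intro q
    have hc : (0 : ℝ) < 2 ^ (q + 1) := by positivity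
    have hc1 : (1 : ℝ) ≤ 2 ^ (q + 1) := one_le_pow₀ (by norm_num)
    by_cases h : 2 ^ (q + 1) ≤ T
    · simp only [hf, hg, ha, hb, if_pos h]
      have h1 : ‖x 0 + ((2 : ℝ) ^ (q + 1)) • (x (q + 1) - x q)‖ ≤ B + 2 ^ (q + 1) * (2 * B) := by
        calc ‖x 0 + ((2 : ℝ) ^ (q + 1)) • (x (q + 1) - x q)‖
            ≤ ‖x 0‖ + ‖((2 : ℝ) ^ (q + 1)) • (x (q + 1) - x q)‖ := norm_add_le _ _
          _ ≤ B + 2 ^ (q + 1) * (2 * B) := by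
              rw [norm_smul]
              gcongr
              · exact hx 0
              · simp [abs_of_pos hc]
              · calc ‖x (q + 1) - x q‖ ≤ ‖x (q + 1)‖ + ‖x q‖ := norm_sub_le _ _
                  _ ≤ 2 * B := by have := hx (q + 1); have := hx q; linarith
      have h2 : ‖x 0 + ((2 : ℝ) ^ (q + 1)) • (x (q + 1) - x q)‖ ^ 2
          ≤ (B + 2 ^ (q + 1) * (2 * B)) ^ 2 := by
        exact pow_le_pow_left₀ (norm_nonneg _) h1 2
      calc ((1 : ℝ) / 2 ^ (q + 1)) * ‖x 0 + ((2 : ℝ) ^ (q + 1)) • (x (q + 1) - x q)‖ ^ 2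
          ≤ ((1 : ℝ) / 2 ^ (q + 1)) * (B + 2 ^ (q + 1) * (2 * B)) ^ 2 := by
            apply mul_le_mul_of_nonneg_left h2 (by positivity)
        _ ≤ ((1 : ℝ) / 2 ^ (q + 1)) * (2 * B ^ 2 + 8 * B ^ 2 * ((2 : ℝ) ^ (q + 1)) ^ 2) := by
            apply mul_le_mul_of_nonneg_left _ (by positivity)
            nlinarith [mul_nonneg (sq_nonneg (2 * (2 : ℝ) ^ (q + 1) - 1)) (sq_nonneg B)]
        _ = 2 * B ^ 2 * ((1 : ℝ) / 2 ^ (q + 1)) + 8 * B ^ 2 * (2 : ℝ) ^ (q + 1) := by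
            field_simp
    · simp only [hf, hg, ha, hb, if_neg h, add_zero]
      have h2 : ‖x 0‖ ^ 2 ≤ 2 * B ^ 2 := by
        nlinarith [hx 0, norm_nonneg (x 0), sq_nonneg B]
      calc ((1 : ℝ) / 2 ^ (q + 1)) * ‖x 0‖ ^ 2 ≤ ((1 : ℝ) / 2 ^ (q + 1)) * (2 * B ^ 2) := by
            apply mul_le_mul_of_nonneg_left h2 (by positivity)
        _ = 2 * B ^ 2 * ((1 : ℝ) / 2 ^ (q + 1)) := by ring
  -- summability
  have hsa : Summable a := by
    have : Summable (fun q : ℕ => ((1 : ℝ) / 2) ^ (q + 1)) :=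
      (summable_geometric_two).comp_injective (add_left_injective 1)
    apply ((this.mul_left (2 * B ^ 2))).congr
    intro q
    simp [ha, div_pow]
  have hbz : ∀ q ∉ Finset.range T, b q = 0 := by
    intro q hq
    simp only [Finset.mem_range, not_lt] at hq
    have : ¬ 2 ^ (q + 1) ≤ T := by
      have h1 : q + 1 ≤ 2 ^ (q + 1) := Nat.le_of_lt Nat.lt_two_pow_self
      omega
    simp [hb, this]
  have hsb : Summable b := summable_of_ne_finset_zero hbz
  have hsg : Summable g := hsa.add hsb
  have hf0 : ∀ q, 0 ≤ f q := fun q => by positivity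
  have hsf : Summable f := Summable.of_nonneg_of_le hf0 key hsg
  -- compute tsum g
  have h2K : (2 : ℝ) ^ K ≤ (T : ℝ) := by
    exact_mod_cast Nat.pow_log_le_self 2 hT0
  have hKT : K ≤ T := by
    have h1 : K < 2 ^ K := Nat.lt_two_pow_self
    have h2 : 2 ^ K ≤ T := Nat.pow_log_le_self 2 hT0
    omega
  have hcond : ∀ q : ℕ, (2 ^ (q + 1) ≤ T ↔ q < K) := by
    intro q
    rw [← Nat.le_log_iff_pow_le one_lt_two hT0]
    omega
  have hta : ∑' q, a q = 2 * B ^ 2 := by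
    have h1 : ∑' q : ℕ, (1 : ℝ) / 2 ^ (q + 1) = 1 := by
      calc ∑' q : ℕ, (1 : ℝ) / 2 ^ (q + 1)
          = ∑' q : ℕ, (1 : ℝ) / 2 / 2 ^ q :=
            tsum_congr (fun q => by rw [pow_succ]; field_simp)
        _ = 1 := tsum_geometric_two' 1
    rw [ha, tsum_mul_left, h1]
    ring
  have htb : ∑' q, b q ≤ 16 * B ^ 2 * T := by
    rw [tsum_eq_sum hbz]
    have hsub : Finset.range K ⊆ Finset.range T := Finset.range_subset_range.mpr hKT
    have heq : ∑ q ∈ Finset.range T, b q = ∑ q ∈ Finset.range K, (8 * B ^ 2 * (2 : ℝ) ^ (q + 1)) := by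
      rw [← Finset.sum_subset hsub]
      · apply Finset.sum_congr rfl
        intro q hq
        simp only [Finset.mem_range] at hq
        simp [hb, (hcond q).mpr hq]
      · intro q _ hq
        simp only [Finset.mem_range, not_lt] at hq
        have : ¬ 2 ^ (q + 1) ≤ T := by rw [hcond q]; omega
        simp [hb, this]
    rw [heq]
    have hgeom : ∑ q ∈ Finset.range K, (2 : ℝ) ^ (q + 1) = 2 * ((2 : ℝ) ^ K - 1) := by
      have := geom_sum_eq (by norm_num : (2 : ℝ) ≠ 1) K
      calc ∑ q ∈ Finset.range K, (2 : ℝ) ^ (q + 1) = ∑ q ∈ Finset.range K, 2 * (2 : ℝ) ^ q := by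
            apply Finset.sum_congr rfl; intro q _; ring
        _ = 2 * ∑ q ∈ Finset.range K, (2 : ℝ) ^ q := by rw [Finset.mul_sum]
        _ = 2 * ((2 : ℝ) ^ K - 1) := by rw [this]; ring
    rw [← Finset.mul_sum, hgeom]
    have hT1 : (1 : ℝ) ≤ T := by exact_mod_cast hT
    nlinarith [sq_nonneg B]
  calc ∑' q, f q ≤ ∑' q, g q := Summable.tsum_le_tsum key hsf hsg
    _ = ∑' q, a q + ∑' q, b q := Summable.tsum_add hsa hsb
    _ ≤ 2 * B ^ 2 + 16 * B ^ 2 * T := by rw [hta]; linarith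
end

section
/- Let (Ω, μ) be a probability space, let E be a real normed vector space, let T ≥ 1 be an integer, set N = ⌊log₂ T⌋, let μ̄ ∈ E, let K ≥ 0, and let x_j : Ω → E (j ≥ 0) be square-integrable random elements such that ∫ ‖x_j(ω) − μ̄‖² dμ(ω) ≤ K / 2^j for every 0 ≤ j ≤ N. Then Σ_{q=1}^∞ 2^{-q} ∫ ‖ x_0(ω) + (if 2^q ≤ T then 2^q • (x_q(ω) − x_{q−1}(ω)) else 0) − μ̄ ‖² dμ(ω) ≤ 2K(1 + 6N). That is, the mean-squared error of the MLMC estimator with respect to the target μ̄ is at most 2K(1 + 6⌊log₂ T⌋). -/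
open MeasureTheory

lemma mlmc_ptwise {E : Type*} [NormedAddCommGroup E] (u v w : E) :
    ‖u + v - w‖ ^ 2 ≤ 3 * (‖u‖ ^ 2 + ‖v‖ ^ 2 + ‖w‖ ^ 2) := by
  have h1 : ‖u + v - w‖ ≤ ‖u‖ + ‖v‖ + ‖w‖ :=
    (norm_sub_le _ _).trans (by gcongr; exact norm_add_le _ _)
  nlinarith [pow_le_pow_left₀ (norm_nonneg (u + v - w)) h1 2,
    sq_nonneg (‖u‖ - ‖v‖), sq_nonneg (‖v‖ - ‖w‖), sq_nonneg (‖u‖ - ‖w‖)]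

/-- MLMC mean-squared error bound: if the level-j estimates x_j have mean-squared
error at most K/2^j around the target μ̄ for every 0 ≤ j ≤ N = ⌊log₂ T⌋, then the
mean-squared error of the MLMC estimator (with level Q ~ Geom(1/2) independent of ω)
is at most 2K(1 + 6N). -/
theorem mlmc_mse_bound {Ω : Type*} [MeasurableSpace Ω] (μ : Measure Ω)
    [IsProbabilityMeasure μ]
    {E : Type*} [NormedAddCommGroup E] [NormedSpace ℝ E]
    (T : ℕ) (hT : 1 ≤ T) (μbar : E) (K : ℝ) (hK : 0 ≤ K)
    (x : ℕ → Ω → E)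
    (hL2 : ∀ j, MemLp (x j) 2 μ)
    (hmse : ∀ j ≤ Nat.log 2 T, ∫ ω, ‖x j ω - μbar‖ ^ 2 ∂μ ≤ K / 2 ^ j) :
    ∑' q : ℕ, ((1 : ℝ) / 2 ^ (q + 1)) *
      ∫ ω, ‖x 0 ω +
          (if 2 ^ (q + 1) ≤ T then ((2 : ℝ) ^ (q + 1)) • (x (q + 1) ω - x q ω) else 0)
          - μbar‖ ^ 2 ∂μ
      ≤ 2 * K * (1 + 6 * (Nat.log 2 T : ℝ)) := by
  set N := Nat.log 2 T with hN
  set t : ℕ → ℝ := fun q => ((1 : ℝ) / 2 ^ (q + 1)) *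
      ∫ ω, ‖x 0 ω +
          (if 2 ^ (q + 1) ≤ T then ((2 : ℝ) ^ (q + 1)) • (x (q + 1) ω - x q ω) else 0)
          - μbar‖ ^ 2 ∂μ with ht
  set g2 : ℕ → ℝ := fun q =>
      if q < N then 2 * K * (1 / 2 : ℝ) ^ (q + 1) + 9 * K else 0 with hg2
  set g : ℕ → ℝ := fun q => K * (1 / 2 : ℝ) ^ (q + 1) + g2 q with hg
  have hT0 : T ≠ 0 := by omega
  have hd : ∀ j, MemLp (fun ω => x j ω - μbar) 2 μ :=
    fun j => (hL2 j).sub (memLp_const μbar)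
  have hint : ∀ j, Integrable (fun ω => ‖x j ω - μbar‖ ^ 2) μ :=
    fun j => ((hd j).norm).integrable_sq
  have hmse0 : ∫ ω, ‖x 0 ω - μbar‖ ^ 2 ∂μ ≤ K := by
    simpa using hmse 0 (Nat.zero_le _)
  have hhalf : ∀ q : ℕ, ((1 : ℝ) / 2 ^ (q + 1)) = (1 / 2 : ℝ) ^ (q + 1) := by
    intro q; rw [div_pow, one_pow]
  -- main pointwise-in-q bound
  have htg : ∀ q, t q ≤ g q := by
    intro q
    by_cases hq : 2 ^ (q + 1) ≤ T
    · have hqN : q + 1 ≤ N := (Nat.le_log_iff_pow_le one_lt_two hT0).mpr hq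
      set c : ℝ := (2 : ℝ) ^ (q + 1) with hc
      have hc0 : (0 : ℝ) ≤ c := by positivity
      have hpt : ∀ ω, ‖x 0 ω + c • (x (q + 1) ω - x q ω) - μbar‖ ^ 2 ≤
          3 * (‖x 0 ω - μbar‖ ^ 2 + c ^ 2 * ‖x (q + 1) ω - μbar‖ ^ 2
            + c ^ 2 * ‖x q ω - μbar‖ ^ 2) := by
        intro ω
        have heq : x 0 ω + c • (x (q + 1) ω - x q ω) - μbar
            = (x 0 ω - μbar) + c • (x (q + 1) ω - μbar) - c • (x q ω - μbar) := by
          simp only [smul_sub]; abel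
        rw [heq]
        have h1 := mlmc_ptwise (x 0 ω - μbar) (c • (x (q + 1) ω - μbar))
          (c • (x q ω - μbar))
        have e1 : ‖c • (x (q + 1) ω - μbar)‖ ^ 2 = c ^ 2 * ‖x (q + 1) ω - μbar‖ ^ 2 := by
          rw [norm_smul, mul_pow, Real.norm_eq_abs, sq_abs]
        have e2 : ‖c • (x q ω - μbar)‖ ^ 2 = c ^ 2 * ‖x q ω - μbar‖ ^ 2 := by
          rw [norm_smul, mul_pow, Real.norm_eq_abs, sq_abs]
        rw [e1, e2] at h1
        exact h1
      have hF : MemLp (fun ω => x 0 ω + c • (x (q + 1) ω - x q ω) - μbar) 2 μ := by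
        have := ((hL2 0).add (((hL2 (q + 1)).sub (hL2 q)).const_smul c)).sub
          (memLp_const (μ := μ) μbar)
        simpa [Pi.add_def, Pi.sub_def, Pi.smul_def] using this
      have hLint : Integrable
          (fun ω => ‖x 0 ω + c • (x (q + 1) ω - x q ω) - μbar‖ ^ 2) μ :=
        hF.norm.integrable_sq
      have hRint : Integrable (fun ω => 3 * (‖x 0 ω - μbar‖ ^ 2
          + c ^ 2 * ‖x (q + 1) ω - μbar‖ ^ 2 + c ^ 2 * ‖x q ω - μbar‖ ^ 2)) μ :=
        (((hint 0).add ((hint (q + 1)).const_mul (c ^ 2))).add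
          ((hint q).const_mul (c ^ 2))).const_mul 3
      have hIle : ∫ ω, ‖x 0 ω + c • (x (q + 1) ω - x q ω) - μbar‖ ^ 2 ∂μ ≤
          3 * ((∫ ω, ‖x 0 ω - μbar‖ ^ 2 ∂μ)
            + c ^ 2 * ∫ ω, ‖x (q + 1) ω - μbar‖ ^ 2 ∂μ
            + c ^ 2 * ∫ ω, ‖x q ω - μbar‖ ^ 2 ∂μ) := by
        refine (integral_mono hLint hRint hpt).trans_eq ?_
        have hint01 : Integrable (fun ω => ‖x 0 ω - μbar‖ ^ 2
            + c ^ 2 * ‖x (q + 1) ω - μbar‖ ^ 2) μ :=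
          (hint 0).add ((hint (q + 1)).const_mul (c ^ 2))
        rw [integral_const_mul,
          integral_add hint01 ((hint q).const_mul (c ^ 2)),
          integral_add (hint 0) ((hint (q + 1)).const_mul (c ^ 2)),
          integral_const_mul, integral_const_mul]
      have hI2 : ∫ ω, ‖x 0 ω + c • (x (q + 1) ω - x q ω) - μbar‖ ^ 2 ∂μ ≤
          3 * (K + c ^ 2 * (K / 2 ^ (q + 1)) + c ^ 2 * (K / 2 ^ q)) := by
        refine hIle.trans ?_
        gcongr
        exacts [hmse (q + 1) hqN, hmse q (Nat.le_of_succ_le hqN)]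
      have harith : ((1 : ℝ) / 2 ^ (q + 1)) *
          (3 * (K + c ^ 2 * (K / 2 ^ (q + 1)) + c ^ 2 * (K / 2 ^ q)))
          = K * (1 / 2 : ℝ) ^ (q + 1) + (2 * K * (1 / 2 : ℝ) ^ (q + 1) + 9 * K) := by
        have h2q : ((2 : ℝ) ^ q) ≠ 0 := by positivity
        rw [hc, ← hhalf q, pow_succ]
        field_simp
        ring
      calc t q = ((1 : ℝ) / 2 ^ (q + 1)) *
            ∫ ω, ‖x 0 ω + c • (x (q + 1) ω - x q ω) - μbar‖ ^ 2 ∂μ := by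
              rw [ht]; simp only [if_pos hq]; rfl
        _ ≤ ((1 : ℝ) / 2 ^ (q + 1)) *
            (3 * (K + c ^ 2 * (K / 2 ^ (q + 1)) + c ^ 2 * (K / 2 ^ q))) := by
              apply mul_le_mul_of_nonneg_left hI2 (by positivity)
        _ = K * (1 / 2 : ℝ) ^ (q + 1) + (2 * K * (1 / 2 : ℝ) ^ (q + 1) + 9 * K) := harith
        _ ≤ g q := by
              rw [hg, hg2]
              simp only [if_pos (show q < N by omega)]
              exact le_rfl
    · have hg2nn : 0 ≤ g2 q := by
        rw [hg2]; dsimp only; split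
        · have : (0:ℝ) ≤ (1 / 2 : ℝ) ^ (q + 1) := by positivity
          nlinarith
        · exact le_rfl
      calc t q = ((1 : ℝ) / 2 ^ (q + 1)) * ∫ ω, ‖x 0 ω - μbar‖ ^ 2 ∂μ := by
            rw [ht]; simp only [if_neg hq, add_zero]
        _ ≤ ((1 : ℝ) / 2 ^ (q + 1)) * K :=
            mul_le_mul_of_nonneg_left hmse0 (by positivity)
        _ = K * (1 / 2 : ℝ) ^ (q + 1) := by rw [hhalf]; ring
        _ ≤ g q := by rw [hg]; linarith
  -- nonnegativity and summability
  have htnn : ∀ q, 0 ≤ t q := by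
    intro q
    exact mul_nonneg (by positivity) (integral_nonneg fun ω => by positivity)
  have hg1sum : Summable (fun q : ℕ => K * (1 / 2 : ℝ) ^ (q + 1)) := by
    have h := (summable_geometric_of_lt_one (by norm_num : (0:ℝ) ≤ 1 / 2)
      (by norm_num : (1 / 2 : ℝ) < 1)).mul_left (K * (1 / 2))
    exact h.congr fun q => by rw [pow_succ]; ring
  have hg2zero : ∀ q ∉ Finset.range N, g2 q = 0 := by
    intro q hq
    rw [hg2]; exact if_neg (by simpa using hq)
  have hg2sum : Summable g2 := summable_of_ne_finset_zero hg2zero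
  have hgsum : Summable g := hg1sum.add hg2sum
  have htsum : Summable t := Summable.of_nonneg_of_le htnn htg hgsum
  have hg1tsum : ∑' q : ℕ, K * (1 / 2 : ℝ) ^ (q + 1) = K := by
    have h := tsum_geometric_of_lt_one (by norm_num : (0:ℝ) ≤ 1 / 2)
      (by norm_num : (1 / 2 : ℝ) < 1)
    calc ∑' q : ℕ, K * (1 / 2 : ℝ) ^ (q + 1)
        = ∑' q : ℕ, (K * (1 / 2)) * (1 / 2 : ℝ) ^ q :=
          tsum_congr fun q => by rw [pow_succ]; ring
      _ = (K * (1 / 2)) * ∑' q : ℕ, (1 / 2 : ℝ) ^ q := tsum_mul_left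
      _ = K := by rw [h]; ring
  have hg2bound : ∑' q, g2 q ≤ 10 * K * N := by
    rw [tsum_eq_sum hg2zero]
    calc ∑ q ∈ Finset.range N, g2 q ≤ ∑ q ∈ Finset.range N, 10 * K := by
          refine Finset.sum_le_sum fun q hq => ?_
          rw [hg2]
          simp only [if_pos (Finset.mem_range.mp hq)]
          have hle : (1 / 2 : ℝ) ^ (q + 1) ≤ (1 / 2 : ℝ) ^ 1 :=
            pow_le_pow_of_le_one (by norm_num) (by norm_num) (by omega)
          rw [pow_one] at hle
          nlinarith
      _ = 10 * K * N := by
          rw [Finset.sum_const, Finset.card_range, nsmul_eq_mul]; ring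
  calc ∑' q, t q ≤ ∑' q, g q := Summable.tsum_le_tsum htg htsum hgsum
    _ = K + ∑' q, g2 q := by
        rw [hg]; rw [Summable.tsum_add hg1sum hg2sum, hg1tsum]
    _ ≤ K + 10 * K * N := by linarith
    _ ≤ 2 * K * (1 + 6 * (N : ℝ)) := by
        nlinarith [hK, (Nat.cast_nonneg N : (0:ℝ) ≤ (N : ℝ))]
end

section
/- Let S be a nonempty finite set, let P : S × S → ℝ be a row-stochastic matrix (P(s,s′) ≥ 0 and Σ_{s′} P(s,s′) = 1 for every s), and let ν : S → ℝ be a probability vector (ν(s) ≥ 0, Σ_s ν(s) = 1) that is invariant for P, with ν(s) > 0 for every s ∈ S, and with P irreducible (for all s, s′ ∈ S there exists n ≥ 1 with (P^n)(s,s′) > 0). Let d ≥ 1, let ψ : S → ℝ^d be any feature map, and define the matrix M := Σ_s Σ_{s′} ν(s) P(s,s′) ψ(s)(ψ(s) − ψ(s′))ᵀ ∈ ℝ^{d×d}. Then for every ζ ∈ ℝ^d, Mζ = 0 if and only if the function s ↦ ⟨ψ(s), ζ⟩ is constant on S. In particular, the kernel of M equals { ζ ∈ ℝ^d : ⟨ψ(s),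 ζ⟩ = ⟨ψ(s′), ζ⟩ for all s, s′ ∈ S }. -/
/-- Kernel characterization of the population TD(0) critic matrix
M = Σ_{s,s'} ν(s) P(s,s') ψ(s)(ψ(s) − ψ(s'))ᵀ: for an irreducible row-stochastic P
with fully supported invariant probability vector ν, Mζ = 0 iff s ↦ ⟨ψ(s), ζ⟩ is
constant on S. -/
theorem td_matrix_kernel_characterization {S : Type*} [Fintype S] [DecidableEq S] [Nonempty S]
    (P : Matrix S S ℝ) (ν : S → ℝ)
    (hP0 : ∀ s s', 0 ≤ P s s') (hP1 : ∀ s, ∑ s' : S, P s s' = 1)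
    (hν0 : ∀ s, 0 < ν s) (hν1 : ∑ s : S, ν s = 1)
    (hinv : ∀ s', ∑ s : S, ν s * P s s' = ν s')
    (hirr : ∀ s s', ∃ n : ℕ, 1 ≤ n ∧ 0 < (P ^ n) s s')
    (d : ℕ) (hd : 1 ≤ d) (ψ : S → Fin d → ℝ) :
    ∀ ζ : Fin d → ℝ,
      (∑ s : S, ∑ s' : S, (ν s * P s s') • Matrix.vecMulVec (ψ s) (ψ s - ψ s')).mulVec ζ = 0
      ↔ ∀ s s', dotProduct (ψ s) ζ = dotProduct (ψ s') ζ := by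
  intro ζ
  set f : S → ℝ := fun s => dotProduct (ψ s) ζ with hfdef
  have hfs : ∀ s : S, f s = ∑ i, ψ s i * ζ i := fun s => rfl
  have e1 : ∀ (F : S → Matrix (Fin d) (Fin d) ℝ),
      (∑ s, F s).mulVec ζ = ∑ s, (F s).mulVec ζ :=
    fun F => map_sum (Matrix.mulVec.addMonoidHomLeft ζ) F Finset.univ
  have hsingle : ∀ (s s' : S) (i : Fin d),
      ((ν s * P s s') • Matrix.vecMulVec (ψ s) (ψ s - ψ s')).mulVec ζ i
        = ν s * P s s' * (f s - f s') * ψ s i := by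
    intro s s' i
    simp only [Matrix.mulVec, dotProduct, Matrix.smul_apply, Matrix.vecMulVec_apply,
      smul_eq_mul, Pi.sub_apply]
    rw [hfs s, hfs s', ← Finset.sum_sub_distrib, Finset.mul_sum, Finset.sum_mul]
    exact Finset.sum_congr rfl fun j _ => by ring
  have hMv : ∀ i, (∑ s : S, ∑ s' : S, (ν s * P s s') • Matrix.vecMulVec (ψ s) (ψ s - ψ s')).mulVec ζ i
      = ∑ s : S, ∑ s' : S, ν s * P s s' * (f s - f s') * ψ s i := by
    intro i
    rw [e1]
    rw [Finset.sum_apply]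
    refine Finset.sum_congr rfl fun s _ => ?_
    rw [e1, Finset.sum_apply]
    exact Finset.sum_congr rfl fun s' _ => hsingle s s' i
  have hCf : ∀ (C : ℝ) (s : S), C * f s = ∑ i, C * ψ s i * ζ i := by
    intro C s
    rw [hfs s, Finset.mul_sum]
    exact Finset.sum_congr rfl fun i _ => (mul_assoc _ _ _).symm
  constructor
  · intro hM
    have hQ : ∑ s : S, ∑ s' : S, ν s * P s s' * (f s - f s') * f s = 0 := by
      calc ∑ s : S, ∑ s' : S, ν s * P s s' * (f s - f s') * f s
          = ∑ s : S, ∑ s' : S, ∑ i, ν s * P s s' * (f s - f s') * ψ s i * ζ i :=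
            Finset.sum_congr rfl fun s _ => Finset.sum_congr rfl fun s' _ =>
              hCf (ν s * P s s' * (f s - f s')) s
        _ = ∑ s : S, ∑ i, ∑ s' : S, ν s * P s s' * (f s - f s') * ψ s i * ζ i :=
            Finset.sum_congr rfl fun s _ => Finset.sum_comm
        _ = ∑ i, ∑ s : S, ∑ s' : S, ν s * P s s' * (f s - f s') * ψ s i * ζ i :=
            Finset.sum_comm
        _ = ∑ i, (∑ s : S, ∑ s' : S, ν s * P s s' * (f s - f s') * ψ s i) * ζ i := by
            refine Finset.sum_congr rfl fun i _ => ?_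
            rw [Finset.sum_mul]
            exact Finset.sum_congr rfl fun s _ => (Finset.sum_mul _ _ _).symm
        _ = 0 := by
            refine Finset.sum_eq_zero fun i _ => ?_
            rw [← hMv i, hM]
            simp
    have hD : ∑ s : S, ∑ s' : S, ν s * P s s' * (f s - f s') ^ 2 = 0 := by
      have key : ∑ s : S, ∑ s' : S, ν s * P s s' * (f s - f s') ^ 2
          = 2 * (∑ s : S, ∑ s' : S, ν s * P s s' * (f s - f s') * f s)
            - (∑ s : S, ∑ s' : S, ν s * P s s' * f s ^ 2)
            + (∑ s : S, ∑ s' : S, ν s * P s s' * f s' ^ 2) := by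
        rw [Finset.mul_sum, ← Finset.sum_sub_distrib, ← Finset.sum_add_distrib]
        refine Finset.sum_congr rfl fun s _ => ?_
        rw [Finset.mul_sum, ← Finset.sum_sub_distrib, ← Finset.sum_add_distrib]
        exact Finset.sum_congr rfl fun s' _ => by ring
      have h1 : ∑ s : S, ∑ s' : S, ν s * P s s' * f s ^ 2 = ∑ s : S, ν s * f s ^ 2 := by
        refine Finset.sum_congr rfl fun s _ => ?_
        have hrow : ∑ s' : S, ν s * P s s' = ν s := by
          rw [← Finset.mul_sum, hP1, mul_one]
        rw [← Finset.sum_mul, hrow]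
      have h2 : ∑ s : S, ∑ s' : S, ν s * P s s' * f s' ^ 2 = ∑ s : S, ν s * f s ^ 2 := by
        rw [Finset.sum_comm]
        refine Finset.sum_congr rfl fun s' _ => ?_
        rw [← Finset.sum_mul, hinv]
      rw [key, h1, h2, hQ]; ring
    have hterm : ∀ s s', P s s' ≠ 0 → f s = f s' := by
      intro s s' hPss
      have hnn : ∀ (a b : S), 0 ≤ ν a * P a b * (f a - f b) ^ 2 := fun a b =>
        mul_nonneg (mul_nonneg (le_of_lt (hν0 a)) (hP0 a b)) (sq_nonneg _)
      have hall := (Finset.sum_eq_zero_iff_of_nonneg (fun a _ =>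
        Finset.sum_nonneg (fun b _ => hnn a b))).mp hD s (Finset.mem_univ s)
      have hz := (Finset.sum_eq_zero_iff_of_nonneg (fun b _ => hnn s b)).mp hall
        s' (Finset.mem_univ s')
      have hνP : ν s * P s s' ≠ 0 := mul_ne_zero (ne_of_gt (hν0 s)) hPss
      have hsq : (f s - f s') ^ 2 = 0 := by
        rcases mul_eq_zero.mp hz with h | h
        · exact absurd h hνP
        · exact h
      have := pow_eq_zero_iff (n := 2) (by norm_num) |>.mp hsq
      linarith [sub_eq_zero.mp this]
    have hpow0 : ∀ n : ℕ, ∀ s s', 0 ≤ (P ^ n) s s' := by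
      intro n
      induction n with
      | zero =>
        intro s s'
        simp only [pow_zero, Matrix.one_apply]
        split <;> norm_num
      | succ n ih =>
        intro s s'
        rw [pow_succ, Matrix.mul_apply]
        exact Finset.sum_nonneg fun t _ => mul_nonneg (ih s t) (hP0 t s')
    have hchain : ∀ n : ℕ, ∀ s s', 0 < (P ^ n) s s' → f s = f s' := by
      intro n
      induction n with
      | zero =>
        intro s s' h
        by_cases hss : s = s'
        · rw [hss]
        · simp [Matrix.one_apply, hss] at h
      | succ n ih =>
        intro s s' h
        rw [pow_succ', Matrix.mul_apply] at h
        obtain ⟨t, _, ht⟩ := Finset.exists_ne_zero_of_sum_ne_zero (ne_of_gt h)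
        have hPt : P s t ≠ 0 := fun h0 => ht (by rw [h0, zero_mul])
        have hPn : (P ^ n) t s' ≠ 0 := fun h0 => ht (by rw [h0, mul_zero])
        exact (hterm s t hPt).trans
          (ih t s' (lt_of_le_of_ne (hpow0 n t s') (Ne.symm hPn)))
    intro s s'
    obtain ⟨n, _, hn⟩ := hirr s s'
    exact hchain n s s' hn
  · intro hconst
    funext i
    rw [hMv i]
    simp only [Pi.zero_apply]
    refine Finset.sum_eq_zero fun s _ => Finset.sum_eq_zero fun s' _ => ?_
    rw [show f s - f s' = 0 from sub_eq_zero.mpr (hconst s s'), mul_zero, zero_mul]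
end
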